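/- Let f : ℝ^d → ℝ^n be continuously differentiable on a convex open set containing the segment from θ₀ to θ, with Jacobian J. Suppose ‖J(ξ) − J(θ₀)‖ ≤ (1 − β)·σ_min(J(θ₀)) for every ξ on the segment, where β ∈ (0,1) and σ_min(J(θ₀)) > 0. Then ‖f(θ) − f(θ₀)‖ ≥ β·σ_min(J(θ₀))·‖θ − θ₀‖. -/

import Mathlib

open Matrix

/-- Smallest singular value of a continuous linear map between Euclidean spaces,
defined as the infimum of `‖T v‖` over unit vectors `v`. -/
noncomputable def sigmaMin {d n : ℕ}
    (T : EuclideanSpace ℝ (Fin d) →L[ℝ] EuclideanSpace ℝ (Fin n)) : ℝ :=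
  ⨅ v : {v : EuclideanSpace ℝ (Fin d) // ‖v‖ = 1}, ‖T v‖

lemma sigmaMin_le {d n : ℕ}
    (T : EuclideanSpace ℝ (Fin d) →L[ℝ] EuclideanSpace ℝ (Fin n))
    (v : EuclideanSpace ℝ (Fin d)) :
    sigmaMin T * ‖v‖ ≤ ‖T v‖ := by
  rcases eq_or_ne v 0 with rfl | hv
  · simp
  · have hnv : ‖v‖ ≠ 0 := norm_ne_zero_iff.mpr hv
    set u : EuclideanSpace ℝ (Fin d) := ‖v‖⁻¹ • v with hu
    have hun : ‖u‖ = 1 := by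
      rw [hu, norm_smul, norm_inv, norm_norm, inv_mul_cancel₀ hnv]
    have hbdd : BddBelow (Set.range fun v : {v : EuclideanSpace ℝ (Fin d) // ‖v‖ = 1} => ‖T v‖) :=
      ⟨0, by rintro x ⟨w, rfl⟩; exact norm_nonneg _⟩
    have h1 : sigmaMin T ≤ ‖T u‖ := ciInf_le hbdd ⟨u, hun⟩
    have h2 : ‖T u‖ = ‖v‖⁻¹ * ‖T v‖ := by
      rw [hu, _root_.map_smul, norm_smul, norm_inv, norm_norm]
    rw [h2] at h1
    have := mul_le_mul_of_nonneg_right h1 (norm_nonneg v)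
    calc sigmaMin T * ‖v‖ ≤ ‖v‖⁻¹ * ‖T v‖ * ‖v‖ := this
      _ = ‖T v‖ := by field_simp

/-- Local lower bound for differentiable maps: if the Jacobian deviates from `J(θ₀)` by at most
`(1−β)σ_min(J(θ₀))` along the segment from `θ₀` to `θ`, then
`‖f(θ) − f(θ₀)‖ ≥ β σ_min(J(θ₀)) ‖θ − θ₀‖`. -/
theorem stmt14 (d n : ℕ)
    (f : EuclideanSpace ℝ (Fin d) → EuclideanSpace ℝ (Fin n))
    (s : Set (EuclideanSpace ℝ (Fin d))) (hs : IsOpen s) (hconv : Convex ℝ s)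
    (θ₀ θ : EuclideanSpace ℝ (Fin d)) (hseg : segment ℝ θ₀ θ ⊆ s)
    (hf : ContDiffOn ℝ 1 f s)
    (β : ℝ) (hβ0 : 0 < β) (hβ1 : β < 1)
    (hσ : 0 < sigmaMin (fderiv ℝ f θ₀))
    (hJ : ∀ ξ ∈ segment ℝ θ₀ θ,
      ‖fderiv ℝ f ξ - fderiv ℝ f θ₀‖ ≤ (1 - β) * sigmaMin (fderiv ℝ f θ₀)) :
    β * sigmaMin (fderiv ℝ f θ₀) * ‖θ - θ₀‖ ≤ ‖f θ - f θ₀‖ := by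
  set J₀ := fderiv ℝ f θ₀ with hJ₀
  set σ := sigmaMin J₀ with hσdef
  -- h x := f x - J₀ x
  set h : EuclideanSpace ℝ (Fin d) → EuclideanSpace ℝ (Fin n) := fun x => f x - J₀ x with hh
  have hderiv : ∀ ξ ∈ segment ℝ θ₀ θ,
      HasFDerivWithinAt h (fderiv ℝ f ξ - J₀) (segment ℝ θ₀ θ) ξ := by
    intro ξ hξ
    have hdiff : DifferentiableAt ℝ f ξ :=
      (hf.contDiffAt (hs.mem_nhds (hseg hξ))).differentiableAt one_ne_zero
    exact ((hdiff.hasFDerivAt.sub (J₀.hasFDerivAt)).hasFDerivWithinAt)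
  have hconvseg : Convex ℝ (segment ℝ θ₀ θ) := convex_segment θ₀ θ
  have hmvt : ‖h θ - h θ₀‖ ≤ (1 - β) * σ * ‖θ - θ₀‖ :=
    hconvseg.norm_image_sub_le_of_norm_hasFDerivWithin_le hderiv
      (fun x hx => hJ x hx) (left_mem_segment ℝ θ₀ θ) (right_mem_segment ℝ θ₀ θ)
  have hlow : σ * ‖θ - θ₀‖ ≤ ‖J₀ (θ - θ₀)‖ := sigmaMin_le J₀ (θ - θ₀)
  have hkey : ‖h θ - h θ₀‖ = ‖(f θ - f θ₀) - J₀ (θ - θ₀)‖ := by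
    rw [hh]
    simp only [map_sub]
    congr 1
    abel
  have htri : ‖J₀ (θ - θ₀)‖ - ‖(f θ - f θ₀) - J₀ (θ - θ₀)‖ ≤ ‖f θ - f θ₀‖ := by
    have := norm_sub_norm_le (J₀ (θ - θ₀)) (J₀ (θ - θ₀) - (f θ - f θ₀))
    simp only [sub_sub_cancel] at this
    calc ‖J₀ (θ - θ₀)‖ - ‖(f θ - f θ₀) - J₀ (θ - θ₀)‖
        = ‖J₀ (θ - θ₀)‖ - ‖J₀ (θ - θ₀) - (f θ - f θ₀)‖ := by rw [norm_sub_rev]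
      _ ≤ ‖f θ - f θ₀‖ := this
  have : β * σ * ‖θ - θ₀‖ = σ * ‖θ - θ₀‖ - (1 - β) * σ * ‖θ - θ₀‖ := by ring
  rw [this]
  have h2 : ‖(f θ - f θ₀) - J₀ (θ - θ₀)‖ ≤ (1 - β) * σ * ‖θ - θ₀‖ := hkey ▸ hmvt
  linarith
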